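/- Let F be a number field in which 2 has a unique prime 𝔮 above it, and let S = {𝔮}. If (λ, μ) is a solution to the S-unit equation λ + μ = 1 with λ, μ ∈ O_S^×, then there exists a solution (λ', μ') with λ' + μ' = 1, λ' ∈ O_F ∩ O_S^×, μ' ∈ O_F^×, and max{|ord_𝔮(λ')|, |ord_𝔮(μ')|} = max{|ord_𝔮(λ)|, |ord_𝔮(μ)|}. -/

import Mathlib

open IsDedekindDomain NumberField Multiplicative
open scoped Multiplicative

local notation "ℤₘ₀" => WithZero (Multiplicative ℤ)

/-- The `𝔮`-adic valuation `ord_𝔮 : F → ℤ` (junk value `0` at `x = 0`). -/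
noncomputable def ordQ {K : Type*} [Field K] [NumberField K]
    (v : HeightOneSpectrum (𝓞 K)) (x : K) : ℤ :=
  if h : v.valuation K x = 0 then 0
  else - Multiplicative.toAdd (WithZero.unzero h)

section Aux

variable {F : Type*} [Field F] [NumberField F]

open IsDedekindDomain.HeightOneSpectrum Multiplicative

lemma coe_ofAdd_le_iff (m n : ℤ) :
    ((ofAdd m : Multiplicative ℤ) : ℤₘ₀) ≤ ((ofAdd n : Multiplicative ℤ) : ℤₘ₀) ↔ m ≤ n := by
  rw [WithZero.coe_le_coe, Multiplicative.ofAdd_le]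

lemma coe_ofAdd_inj {m n : ℤ}
    (h : ((ofAdd m : Multiplicative ℤ) : ℤₘ₀) = ((ofAdd n : Multiplicative ℤ) : ℤₘ₀)) :
    m = n := by
  rw [WithZero.coe_inj] at h
  exact ofAdd.injective h

lemma val_eq_ofAdd_neg_ordQ (v : HeightOneSpectrum (𝓞 F)) {x : F} (hx : x ≠ 0) :
    v.valuation F x = ((ofAdd (-(ordQ v x)) : Multiplicative ℤ) : ℤₘ₀) := by
  have h : v.valuation F x ≠ 0 := (Valuation.ne_zero_iff _).mpr hx
  rw [ordQ, dif_neg h, neg_neg, ofAdd_toAdd, WithZero.coe_unzero]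

lemma ordQ_eq (v : HeightOneSpectrum (𝓞 F)) {x : F} (hx : x ≠ 0) {n : ℤ}
    (h : v.valuation F x = ((ofAdd (-n) : Multiplicative ℤ) : ℤₘ₀)) : ordQ v x = n := by
  have := (val_eq_ofAdd_neg_ordQ v hx).symm.trans h
  have := coe_ofAdd_inj this
  omega

/-- If `r` has `v`-adic valuation at most that of `s ≠ 0` for every `v`, then `s ∣ r`. -/
lemma dvd_of_intVal_le {r s : 𝓞 F} (hs : s ≠ 0)
    (h : ∀ v : HeightOneSpectrum (𝓞 F), v.intValuationDef r ≤ v.intValuationDef s) :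
    s ∣ r := by
  classical
  by_cases hr : r = 0
  · simp [hr]
  have hspanr : Ideal.span {r} ≠ (0 : Ideal (𝓞 F)) := by
    simpa only [Ne, Ideal.zero_eq_bot, Ideal.span_singleton_eq_bot] using hr
  have hspans : Ideal.span {s} ≠ (0 : Ideal (𝓞 F)) := by
    simpa only [Ne, Ideal.zero_eq_bot, Ideal.span_singleton_eq_bot] using hs
  have hmkr : Associates.mk (Ideal.span {r}) ≠ 0 := Associates.mk_ne_zero.mpr hspanr
  have hmks : Associates.mk (Ideal.span {s}) ≠ 0 := Associates.mk_ne_zero.mpr hspans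
  -- counts of prime factors
  have hcount : ∀ p : Associates (Ideal (𝓞 F)), Irreducible p →
      p.count (Associates.mk (Ideal.span {s})).factors
        ≤ p.count (Associates.mk (Ideal.span {r})).factors := by
    intro p hp
    obtain ⟨J, rfl⟩ := Associates.mk_surjective p
    have hJirr : Irreducible J := Associates.irreducible_mk.mp hp
    have hJprime : Prime J := UniqueFactorizationMonoid.irreducible_iff_prime.mp hJirr
    set v : HeightOneSpectrum (𝓞 F) :=
      ⟨J, Ideal.isPrime_of_prime hJprime, by
        simpa only [Ne, Ideal.zero_eq_bot] using hJprime.ne_zero⟩ with hv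
    have := h v
    rw [IsDedekindDomain.HeightOneSpectrum.intValuationDef_if_neg v hr,
      IsDedekindDomain.HeightOneSpectrum.intValuationDef_if_neg v hs] at this
    rw [WithZero.exp_le_exp, neg_le_neg_iff, Int.ofNat_le] at this
    exact this
  have hfle : (Associates.mk (Ideal.span {s})).factors
      ≤ (Associates.mk (Ideal.span {r})).factors := by
    obtain ⟨ss, hss⟩ := Associates.factors_eq_some_iff_ne_zero.mpr hmks
    obtain ⟨sr, hsr⟩ := Associates.factors_eq_some_iff_ne_zero.mpr hmkr
    rw [hss, hsr] at hcount ⊢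
    rw [WithTop.coe_le_coe, Multiset.le_iff_count]
    rintro ⟨p, hp⟩
    have := hcount p hp
    rwa [Associates.count_some hp, Associates.count_some hp] at this
  have key : Ideal.span {s} ∣ Ideal.span {r} :=
    Associates.mk_dvd_mk.mp (Associates.factors_le.mp hfle)
  rw [Ideal.dvd_iff_le, Ideal.span_singleton_le_span_singleton] at key
  exact key

/-- An element of `F` whose valuations are all at most one is integral. -/
lemma exists_integer_of_val_le_one {x : F}
    (h : ∀ v : HeightOneSpectrum (𝓞 F), v.valuation F x ≤ 1) :
    ∃ a : 𝓞 F, algebraMap (𝓞 F) F a = x := by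
  obtain ⟨r, s, hs, rfl⟩ := IsFractionRing.div_surjective (A := 𝓞 F) x
  have hs0 : s ≠ 0 := nonZeroDivisors.ne_zero hs
  have hsF : algebraMap (𝓞 F) F s ≠ 0 := by
    simpa using (map_ne_zero_iff _ (IsFractionRing.injective (𝓞 F) F)).mpr hs0
  have hle : ∀ v : HeightOneSpectrum (𝓞 F), v.intValuationDef r ≤ v.intValuationDef s := by
    intro v
    have h1 : v.valuation F (algebraMap (𝓞 F) F r)
        = v.valuation F (algebraMap (𝓞 F) F r / algebraMap (𝓞 F) F s)
          * v.valuation F (algebraMap (𝓞 F) F s) := by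
      rw [← Valuation.map_mul, div_mul_cancel₀ _ hsF]
    have h2 : v.valuation F (algebraMap (𝓞 F) F r / algebraMap (𝓞 F) F s)
        * v.valuation F (algebraMap (𝓞 F) F s) ≤ 1 * v.valuation F (algebraMap (𝓞 F) F s) :=
      mul_le_mul_left (h v) _
    rw [one_mul] at h2
    have := h1.trans_le h2
    rwa [IsDedekindDomain.HeightOneSpectrum.valuation_of_algebraMap,
      IsDedekindDomain.HeightOneSpectrum.valuation_of_algebraMap] at this
  obtain ⟨c, rfl⟩ := dvd_of_intVal_le hs0 hle
  refine ⟨c, ?_⟩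
  rw [map_mul]
  rw [mul_comm, mul_div_assoc, div_self hsF, mul_one]

/-- A unit of `F` whose valuations are all one comes from a unit of `𝓞 F`. -/
lemma exists_unit_of_val_eq_one {x : Fˣ}
    (h : ∀ v : HeightOneSpectrum (𝓞 F), v.valuation F (x : F) = 1) :
    ∃ u : (𝓞 F)ˣ, algebraMap (𝓞 F) F (u : 𝓞 F) = (x : F) := by
  obtain ⟨a, ha⟩ := exists_integer_of_val_le_one (fun v => (h v).le)
  have hinv : ∀ v : HeightOneSpectrum (𝓞 F), v.valuation F ((x : F)⁻¹) ≤ 1 := by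
    intro v
    rw [map_inv₀, h v, inv_one]
  obtain ⟨b, hb⟩ := exists_integer_of_val_le_one hinv
  have hinj := IsFractionRing.injective (𝓞 F) F
  refine ⟨⟨a, b, ?_, ?_⟩, ha⟩
  · apply hinj
    rw [map_mul, ha, hb, map_one, mul_inv_cancel₀ x.ne_zero]
  · apply hinj
    rw [map_mul, ha, hb, map_one, inv_mul_cancel₀ x.ne_zero]

end Aux

/-- **simplifying lemma.** Let `F` be a number field in which `2` has a
unique prime `𝔮` above it and `S = {𝔮}`.  If `(λ, μ)` is a solution of the `S`-unit
equation `λ + μ = 1`, then there is a solution `(λ', μ')` with `λ' ∈ 𝓞 F ∩ 𝓞_S^×`,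
`μ' ∈ 𝓞 F^×` and `max(|ord_𝔮 λ'|, |ord_𝔮 μ'|) = max(|ord_𝔮 λ|, |ord_𝔮 μ|)`. -/
theorem sunit_equation_integral_solution
    (F : Type*) [Field F] [NumberField F]
    (𝔮 : HeightOneSpectrum (𝓞 F)) (h2 : (2 : 𝓞 F) ∈ 𝔮.asIdeal)
    (huniq : ∀ v : HeightOneSpectrum (𝓞 F), (2 : 𝓞 F) ∈ v.asIdeal → v = 𝔮)
    (lam mu : Fˣ)
    (hlam : lam ∈ ({𝔮} : Set (HeightOneSpectrum (𝓞 F))).unit F)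
    (hmu : mu ∈ ({𝔮} : Set (HeightOneSpectrum (𝓞 F))).unit F)
    (hsum : (lam : F) + (mu : F) = 1) :
    ∃ lam' mu' : Fˣ,
      lam' ∈ ({𝔮} : Set (HeightOneSpectrum (𝓞 F))).unit F ∧
      mu' ∈ ({𝔮} : Set (HeightOneSpectrum (𝓞 F))).unit F ∧
      (lam' : F) + (mu' : F) = 1 ∧
      (∃ a : 𝓞 F, algebraMap (𝓞 F) F a = (lam' : F)) ∧
      (∃ u : (𝓞 F)ˣ, algebraMap (𝓞 F) F (u : 𝓞 F) = (mu' : F)) ∧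
      max |ordQ 𝔮 (lam' : F)| |ordQ 𝔮 (mu' : F)|
        = max |ordQ 𝔮 (lam : F)| |ordQ 𝔮 (mu : F)| := by
  classical
  set a := ordQ 𝔮 (lam : F) with ha
  set b := ordQ 𝔮 (mu : F) with hb
  have hlam0 : (lam : F) ≠ 0 := lam.ne_zero
  have hmu0 : (mu : F) ≠ 0 := mu.ne_zero
  have Hlam : ∀ v : HeightOneSpectrum (𝓞 F), v ≠ 𝔮 → v.valuation F (lam : F) = 1 :=
    fun v hv => Set.unit_valuation_eq_one {𝔮} F ⟨lam, hlam⟩ (by simpa using hv)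
  have Hmu : ∀ v : HeightOneSpectrum (𝓞 F), v ≠ 𝔮 → v.valuation F (mu : F) = 1 :=
    fun v hv => Set.unit_valuation_eq_one {𝔮} F ⟨mu, hmu⟩ (by simpa using hv)
  have hvlam : 𝔮.valuation F (lam : F)
      = ((Multiplicative.ofAdd (-a) : Multiplicative ℤ) : ℤₘ₀) :=
    val_eq_ofAdd_neg_ordQ 𝔮 hlam0
  have hvmu : 𝔮.valuation F (mu : F)
      = ((Multiplicative.ofAdd (-b) : Multiplicative ℤ) : ℤₘ₀) :=
    val_eq_ofAdd_neg_ordQ 𝔮 hmu0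
  -- fact 1 : if a ≠ b then min a b = 0
  have fact1 : a ≠ b → min a b = 0 := by
    intro hab
    have hne : 𝔮.valuation F (lam : F) ≠ 𝔮.valuation F (mu : F) := by
      rw [hvlam, hvmu]
      intro hc
      exact hab (by have := coe_ofAdd_inj hc; omega)
    have := Valuation.map_add_of_distinct_val (𝔮.valuation F) hne
    rw [hsum, Valuation.map_one, hvlam, hvmu] at this
    rw [show (1 : ℤₘ₀) = ((Multiplicative.ofAdd (-(0:ℤ)) : Multiplicative ℤ) : ℤₘ₀) by simp]
      at this
    rcases le_total a b with h | h
    · rw [max_eq_left (by rw [coe_ofAdd_le_iff]; omega)] at this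
      have := coe_ofAdd_inj this
      omega
    · rw [max_eq_right (by rw [coe_ofAdd_le_iff]; omega)] at this
      have := coe_ofAdd_inj this
      omega
  -- fact 2 : min a b ≤ 0
  have fact2 : min a b ≤ 0 := by
    have h1 : (1 : ℤₘ₀) ≤ max (𝔮.valuation F (lam : F)) (𝔮.valuation F (mu : F)) := by
      have := Valuation.map_add (𝔮.valuation F) (lam : F) (mu : F)
      rw [hsum, Valuation.map_one] at this
      exact this
    rw [hvlam, hvmu] at h1
    rcases le_total a b with h | h
    · rw [max_eq_left (by rw [coe_ofAdd_le_iff]; omega)] at h1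
      rw [show (1 : ℤₘ₀) = ((Multiplicative.ofAdd (-(0:ℤ)) : Multiplicative ℤ) : ℤₘ₀) by simp,
        coe_ofAdd_le_iff] at h1
      omega
    · rw [max_eq_right (by rw [coe_ofAdd_le_iff]; omega)] at h1
      rw [show (1 : ℤₘ₀) = ((Multiplicative.ofAdd (-(0:ℤ)) : Multiplicative ℤ) : ℤₘ₀) by simp,
        coe_ofAdd_le_iff] at h1
      omega
  by_cases hneg : a < 0
  -- Case C : a < 0, forcing b = a; use (λ⁻¹, -μλ⁻¹)
  · have hab : a = b := by
      by_contra hc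
      have := fact1 hc
      omega
    refine ⟨lam⁻¹, -(mu * lam⁻¹), inv_mem hlam, ?_, ?_, ?_, ?_, ?_⟩
    · -- membership of μ' in S-units
      intro v hv
      have hv' : v ≠ 𝔮 := by simpa using hv
      show v.valuation F ((((-(mu * lam⁻¹)) : Fˣ) : F)) = 1
      simp only [Units.val_neg, Units.val_mul, Units.val_inv_eq_inv_val]
      rw [Valuation.map_neg, Valuation.map_mul, map_inv₀, Hlam v hv', Hmu v hv',
        inv_one, mul_one]
    · -- sum is one
      simp only [Units.val_neg, Units.val_mul, Units.val_inv_eq_inv_val]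
      have hl : (1 : F) - (mu : F) = (lam : F) := by rw [← hsum]; ring
      have hr : ((lam : F))⁻¹ + -((mu : F) * ((lam : F))⁻¹)
          = ((1 : F) - (mu : F)) * ((lam : F))⁻¹ := by ring
      rw [hr, hl, mul_inv_cancel₀ hlam0]
    · -- λ' integral
      apply exists_integer_of_val_le_one
      intro v
      by_cases hv : v = 𝔮
      · subst hv
        simp only [Units.val_inv_eq_inv_val]
        rw [map_inv₀, hvlam, ← WithZero.coe_inv, ← WithZero.coe_one]
        rw [WithZero.coe_le_coe]
        rw [show (Multiplicative.ofAdd (-a) : Multiplicative ℤ)⁻¹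
            = (Multiplicative.ofAdd a : Multiplicative ℤ) by simp]
        rw [show (1 : Multiplicative ℤ) = Multiplicative.ofAdd (0:ℤ) by simp,
          Multiplicative.ofAdd_le]
        omega
      · simp only [Units.val_inv_eq_inv_val]
        rw [map_inv₀, Hlam v hv, inv_one]
    · -- μ' is a unit of 𝓞 F
      apply exists_unit_of_val_eq_one
      intro v
      simp only [Units.val_neg, Units.val_mul, Units.val_inv_eq_inv_val]
      rw [Valuation.map_neg, Valuation.map_mul, map_inv₀]
      by_cases hv : v = 𝔮
      · subst hv
        rw [hvlam, hvmu, ← WithZero.coe_inv, ← WithZero.coe_mul, ← WithZero.coe_one,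
          WithZero.coe_inj, ← ofAdd_neg, ← ofAdd_add]
        rw [show (1 : Multiplicative ℤ) = Multiplicative.ofAdd (0:ℤ) by simp]
        congr 1
        omega
      · rw [Hlam v hv, Hmu v hv, inv_one, mul_one]
    · -- max equality
      have h1 : ordQ 𝔮 ((lam⁻¹ : Fˣ) : F) = -a := by
        apply ordQ_eq 𝔮 (by simp)
        simp only [Units.val_inv_eq_inv_val]
        rw [map_inv₀, hvlam, ← WithZero.coe_inv, WithZero.coe_inj]
        simp
      have h2 : ordQ 𝔮 (((-(mu * lam⁻¹)) : Fˣ) : F) = 0 := by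
        apply ordQ_eq 𝔮 (by simp)
        simp only [Units.val_neg, Units.val_mul, Units.val_inv_eq_inv_val]
        rw [Valuation.map_neg, Valuation.map_mul, map_inv₀, hvlam, hvmu, ← WithZero.coe_inv,
          ← WithZero.coe_mul, WithZero.coe_inj, ← ofAdd_neg, ← ofAdd_add]
        congr 1
        omega
      rw [h1, h2, ← hab, abs_neg, abs_zero]
      simp [max_self, max_eq_left (abs_nonneg a)]
  -- a ≥ 0
  · push_neg at hneg
    have hbnn : 0 ≤ b := by
      by_contra hc
      push_neg at hc
      have hab : b = a := by
        by_contra hc'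
        have := fact1 (Ne.symm hc')
        omega
      omega
    have hmin : a = 0 ∨ b = 0 := by omega
    by_cases hb0 : b = 0
    -- Case A : take (λ, μ)
    · refine ⟨lam, mu, hlam, hmu, hsum, ?_, ?_, rfl⟩
      · apply exists_integer_of_val_le_one
        intro v
        by_cases hv : v = 𝔮
        · subst hv
          rw [hvlam, show (1 : ℤₘ₀) = ((Multiplicative.ofAdd (-(0:ℤ)) : Multiplicative ℤ) : ℤₘ₀)
              by simp, coe_ofAdd_le_iff]
          omega
        · exact (Hlam v hv).le
      · apply exists_unit_of_val_eq_one
        intro v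
        by_cases hv : v = 𝔮
        · subst hv
          rw [hvmu, hb0]
          simp
        · exact Hmu v hv
    -- Case B : a = 0, b > 0; take (μ, λ)
    · have ha0 : a = 0 := by omega
      refine ⟨mu, lam, hmu, hlam, by rw [add_comm]; exact hsum, ?_, ?_, by rw [max_comm]⟩
      · apply exists_integer_of_val_le_one
        intro v
        by_cases hv : v = 𝔮
        · subst hv
          rw [hvmu, show (1 : ℤₘ₀) = ((Multiplicative.ofAdd (-(0:ℤ)) : Multiplicative ℤ) : ℤₘ₀)
              by simp, coe_ofAdd_le_iff]
          omega
        · exact (Hmu v hv).le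
      · apply exists_unit_of_val_eq_one
        intro v
        by_cases hv : v = 𝔮
        · subst hv
          rw [hvlam, ha0]
          simp
        · exact Hlam v hv
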